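/- For every integer L ≥ 1, every K ∈ {1,…,L} and every s ∈ ℝ^L, topsum_{K,ε}(s) converges to topsum_K(s) as ε → 0⁺. -/

import Mathlib

open MeasureTheory ProbabilityTheory

/-- The list of coordinates of `s : ℝ^L` sorted in decreasing order. -/
noncomputable def descSort {L : ℕ} (s : Fin L → ℝ) : List ℝ :=
  (Multiset.sort (Multiset.map s Finset.univ.val) (· ≤ ·)).reverse

/-- `kthLargest K s` is the `K`-th largest coordinate of `s` (1-indexed), i.e. `s_(K)`. -/
noncomputable def kthLargest {L : ℕ} (K : ℕ) (s : Fin L → ℝ) : ℝ :=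
  (descSort s).getD (K - 1) 0

/-- `topsum K s` is the sum of the `K` largest coordinates of `s`,
with the convention `topsum 0 s = 0`. -/
noncomputable def topsum {L : ℕ} (K : ℕ) (s : Fin L → ℝ) : ℝ :=
  ((descSort s).take K).sum

/-- The standard Gaussian measure `N(0, Id_L)` on `ℝ^L`:
the coordinates are i.i.d. standard normal random variables. -/
noncomputable def stdGaussian (L : ℕ) : Measure (EuclideanSpace ℝ (Fin L)) :=
  (Measure.pi (fun _ : Fin L => gaussianReal 0 1)).map (MeasurableEquiv.toLp 2 (Fin L → ℝ))

/-- The smoothed top-sum `topsumSm K ε s = E[topsum K (s + ε Z)]`, `Z ∼ N(0, Id_L)`. -/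
noncomputable def topsumSm {L : ℕ} (K : ℕ) (ε : ℝ) (s : EuclideanSpace ℝ (Fin L)) : ℝ :=
  ∫ z, topsum K (s + ε • z) ∂(stdGaussian L)

/-- The smoothed top-K operator `topSm K ε s = topsumSm K ε s - topsumSm (K-1) ε s`. -/
noncomputable def topSm {L : ℕ} (K : ℕ) (ε : ℝ) (s : EuclideanSpace ℝ (Fin L)) : ℝ :=
  topsumSm K ε s - topsumSm (K - 1) ε s

/-- The 0/1 vector whose entries equal 1 exactly at the `K` coordinates carrying the
`K` largest values of `v` (well defined when the `K`-th and `(K+1)`-th largest values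
of `v` are distinct). -/
noncomputable def argtops {L : ℕ} (K : ℕ) (v : Fin L → ℝ) : Fin L → ℝ :=
  fun i => if kthLargest K v ≤ v i then 1 else 0



section Aux
open scoped NNReal

lemma descSort_coe {L : ℕ} (s : Fin L → ℝ) :
    (↑(descSort s) : Multiset ℝ) = Multiset.map s Finset.univ.val := by
  rw [descSort, Multiset.coe_reverse, Multiset.sort_eq]

lemma descSort_length {L : ℕ} (s : Fin L → ℝ) : (descSort s).length = L := by
  have := congrArg Multiset.card (descSort_coe s)
  simpa using this

lemma descSort_sorted {L : ℕ} (s : Fin L → ℝ) : (descSort s).Pairwise (· ≥ ·) := by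
  rw [descSort, List.pairwise_reverse]
  exact Multiset.pairwise_sort _ (· ≤ ·)

lemma sum_take_le_sum_take_cons {a : ℝ} {l : List ℝ} (h : ∀ x ∈ l, x ≤ a) {k : ℕ}
    (hk : k ≤ l.length) : (l.take k).sum ≤ ((a :: l).take k).sum := by
  cases k with
  | zero => simp
  | succ j =>
    have hj : j < l.length := hk
    rw [List.sum_take_succ l j hj, List.take_succ_cons]
    rw [List.sum_cons]
    have h1 : l[j] ≤ a := h _ (List.getElem_mem hj)
    have h2 : (l.take j).sum ≤ (l.take j).sum := le_refl _
    linarith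

lemma msum_le_take : ∀ {l : List ℝ}, l.Pairwise (· ≥ ·) → ∀ {t : Multiset ℝ}, t ≤ ↑l →
    t.sum ≤ (l.take (Multiset.card t)).sum := by
  intro l
  induction l with
  | nil =>
    intro _ t ht
    have : t = 0 := le_antisymm (by simpa using ht) zero_le
    simp [this]
  | cons a l ih =>
    intro hsort t ht
    have hl : l.Pairwise (· ≥ ·) := hsort.of_cons
    have ha : ∀ x ∈ l, x ≤ a := fun x hx => (List.pairwise_cons.mp hsort).1 x hx
    by_cases hat : a ∈ t
    · obtain ⟨t', rfl⟩ : ∃ t', t = a ::ₘ t' := ⟨t.erase a, (Multiset.cons_erase hat).symm⟩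
      have ht' : t' ≤ ↑l := by
        have : (a ::ₘ t') ≤ a ::ₘ (↑l : Multiset ℝ) := by
          simpa using ht
        exact (Multiset.cons_le_cons_iff a).mp this
      have := ih hl ht'
      simp only [Multiset.card_cons, Multiset.sum_cons, List.take_succ_cons, List.sum_cons]
      linarith
    · have ht2 : t ≤ ↑l := by
        have h' : t ≤ a ::ₘ (↑l : Multiset ℝ) := by simpa using ht
        exact (Multiset.le_cons_of_notMem hat).mp h'
      have hcard : Multiset.card t ≤ l.length := by
        have := Multiset.card_le_card ht2
        simpa using this
      exact le_trans (ih hl ht2) (sum_take_le_sum_take_cons ha hcard)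

lemma exists_le_map {α β : Type*} [DecidableEq β] {f : α → β} : ∀ {m : Multiset α} {t : Multiset β},
    t ≤ m.map f → ∃ m' ≤ m, m'.map f = t := by
  intro m
  induction m using Multiset.induction with
  | empty =>
    intro t ht
    have : t = 0 := le_antisymm (by simpa using ht) zero_le
    exact ⟨0, le_refl _, by simp [this]⟩
  | cons a m ih =>
    intro t ht
    rw [Multiset.map_cons] at ht
    by_cases hat : f a ∈ t
    · obtain ⟨t', rfl⟩ : ∃ t', t = f a ::ₘ t' := ⟨t.erase (f a), (Multiset.cons_erase hat).symm⟩
      have ht' : t' ≤ m.map f := (Multiset.cons_le_cons_iff (f a)).mp ht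
      obtain ⟨m', hm', hmap⟩ := ih ht'
      exact ⟨a ::ₘ m', Multiset.cons_le_cons a hm', by simp [hmap]⟩
    · obtain ⟨m', hm', hmap⟩ := ih ((Multiset.le_cons_of_notMem hat).mp ht)
      exact ⟨m', le_trans hm' (Multiset.le_cons_self m a), hmap⟩

lemma sum_le_topsum {L K : ℕ} (s : Fin L → ℝ) (S : Finset (Fin L)) (hS : S.card = K) :
    ∑ i ∈ S, s i ≤ topsum K s := by
  have hle : Multiset.map s S.val ≤ Multiset.map s Finset.univ.val :=
    Multiset.map_le_map (Finset.val_le_iff.mpr (S.subset_univ))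
  rw [← descSort_coe] at hle
  have h := msum_le_take (descSort_sorted s) hle
  have hcard : Multiset.card (Multiset.map s S.val) = K := by simp [hS]
  rw [hcard] at h
  rw [Finset.sum, topsum]
  exact h

lemma exists_topsum {L K : ℕ} (hKL : K ≤ L) (s : Fin L → ℝ) :
    ∃ S : Finset (Fin L), S.card = K ∧ ∑ i ∈ S, s i = topsum K s := by
  classical
  set l := descSort s with hl
  have htake : (↑(l.take K) : Multiset ℝ) ≤ ↑l := Multiset.coe_le.mpr (l.take_sublist K).subperm
  rw [descSort_coe] at htake
  obtain ⟨m', hm', hmap⟩ := exists_le_map htake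
  have hnodup : m'.Nodup := Multiset.nodup_of_le hm' Finset.univ.nodup
  have hcard : Multiset.card m' = K := by
    have h1 : Multiset.card (Multiset.map s m') = Multiset.card (↑(l.take K) : Multiset ℝ) := by
      rw [hmap]
    simp only [Multiset.card_map, Multiset.coe_card, List.length_take] at h1
    rw [h1, hl, descSort_length]
    exact min_eq_left hKL
  refine ⟨⟨m', hnodup⟩, hcard, ?_⟩
  have hsum : (Multiset.map s m').sum = ((l.take K : List ℝ) : Multiset ℝ).sum := by rw [hmap]
  rw [Finset.sum, topsum]
  simpa using hsum

lemma topsum_sub_le {L K : ℕ} (hKL : K ≤ L) (a b : Fin L → ℝ) :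
    topsum K a - topsum K b ≤ ∑ i, |a i - b i| := by
  obtain ⟨S, hScard, hSsum⟩ := exists_topsum hKL a
  have h1 : ∑ i ∈ S, b i ≤ topsum K b := sum_le_topsum b S hScard
  have h2 : ∑ i ∈ S, a i - ∑ i ∈ S, b i ≤ ∑ i, |a i - b i| := by
    rw [← Finset.sum_sub_distrib]
    calc ∑ i ∈ S, (a i - b i) ≤ ∑ i ∈ S, |a i - b i| :=
          Finset.sum_le_sum fun i _ => le_abs_self _
      _ ≤ ∑ i, |a i - b i| :=
          Finset.sum_le_sum_of_subset_of_nonneg S.subset_univ fun i _ _ => abs_nonneg _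
  linarith

lemma abs_topsum_sub_le {L K : ℕ} (hKL : K ≤ L) (a b : Fin L → ℝ) :
    |topsum K a - topsum K b| ≤ ∑ i, |a i - b i| := by
  rw [abs_sub_le_iff]
  constructor
  · exact topsum_sub_le hKL a b
  · have := topsum_sub_le hKL b a
    have heq : ∀ i, |b i - a i| = |a i - b i| := fun i => abs_sub_comm _ _
    simpa [heq] using this

lemma integrable_abs_gaussian : Integrable (fun x : ℝ => |x|) (gaussianReal 0 1) := by
  rw [gaussianReal_of_var_ne_zero 0 one_ne_zero]
  rw [integrable_withDensity_iff (measurable_gaussianPDF 0 1)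
    (Filter.Eventually.of_forall fun x => ENNReal.ofReal_lt_top)]
  have heq : (fun x : ℝ => |x| * (gaussianPDF 0 1 x).toReal) =
      fun x => (Real.sqrt (2 * Real.pi))⁻¹ * |x * Real.exp (-(2⁻¹) * x ^ 2)| := by
    ext x
    rw [gaussianPDF, ENNReal.toReal_ofReal (gaussianPDFReal_nonneg 0 1 x), gaussianPDFReal,
      abs_mul, abs_of_pos (Real.exp_pos _)]
    simp only [NNReal.coe_one, mul_one, sub_zero]
    rw [show -x ^ 2 / 2 = -(2⁻¹) * x ^ 2 by ring]
    ring
  rw [heq]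
  exact ((integrable_mul_exp_neg_mul_sq (by norm_num : (0:ℝ) < 2⁻¹)).abs).const_mul _

lemma map_eval_pi (L : ℕ) (i : Fin L) :
    (Measure.pi fun _ : Fin L => gaussianReal 0 1).map (fun z => z i) = gaussianReal 0 1 := by
  classical
  apply Measure.ext
  intro A hA
  rw [Measure.map_apply (measurable_pi_apply i) hA]
  have hpre : (fun z : Fin L → ℝ => z i) ⁻¹' A =
      Set.pi Set.univ (Function.update (fun _ : Fin L => (Set.univ : Set ℝ)) i A) :=
    Set.eval_preimage
  rw [hpre, Measure.pi_pi]
  rw [Finset.prod_eq_single i (fun j _ hj => by simp [Function.update_of_ne hj])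
    (fun h => absurd (Finset.mem_univ i) h)]
  simp

lemma integrable_abs_coord (L : ℕ) (i : Fin L) :
    Integrable (fun z : EuclideanSpace ℝ (Fin L) => |z i|) (stdGaussian L) := by
  have h : Integrable (fun z : Fin L → ℝ => |z i|) (Measure.pi fun _ => gaussianReal 0 1) := by
    have h := integrable_abs_gaussian
    rw [← map_eval_pi L i] at h
    exact (integrable_map_measure measurable_abs.aestronglyMeasurable
      (measurable_pi_apply i).aemeasurable).mp h
  rw [_root_.stdGaussian]
  exact (integrable_map_equiv _ _).mpr h

lemma abs_coord_le_norm {L : ℕ} (x : EuclideanSpace ℝ (Fin L)) (i : Fin L) : |x i| ≤ ‖x‖ := by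
  rw [EuclideanSpace.norm_eq, ← Real.sqrt_sq_eq_abs]
  apply Real.sqrt_le_sqrt
  have : |x i| ^ 2 ≤ ∑ j, ‖x j‖ ^ 2 := by
    have := Finset.single_le_sum (f := fun j => ‖x j‖ ^ 2) (fun j _ => sq_nonneg _)
      (Finset.mem_univ i)
    simpa [Real.norm_eq_abs, sq_abs] using this
  simpa [sq_abs] using this

lemma continuous_topsum {L K : ℕ} (hKL : K ≤ L) :
    Continuous fun z : EuclideanSpace ℝ (Fin L) => topsum K z := by
  have : LipschitzWith (L : ℝ≥0) fun z : EuclideanSpace ℝ (Fin L) => topsum K z := by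
    apply LipschitzWith.of_dist_le_mul
    intro a b
    rw [Real.dist_eq]
    calc |topsum K a - topsum K b| ≤ ∑ i, |a i - b i| := abs_topsum_sub_le hKL a b
      _ ≤ ∑ _i : Fin L, ‖a - b‖ := by
          apply Finset.sum_le_sum
          intro i _
          have := abs_coord_le_norm (a - b) i
          simpa using this
      _ = (L : ℝ) * ‖a - b‖ := by simp [mul_comm]
      _ = (L : ℝ) * dist a b := by rw [dist_eq_norm]
  exact this.continuous

instance stdGaussian_prob (L : ℕ) : IsProbabilityMeasure (stdGaussian L) := by
  rw [_root_.stdGaussian]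
  exact Measure.isProbabilityMeasure_map (MeasurableEquiv.toLp 2 (Fin L → ℝ)).measurable.aemeasurable

lemma integrand_bound {L K : ℕ} (hKL : K ≤ L) (s : EuclideanSpace ℝ (Fin L)) (ε : ℝ)
    (z : EuclideanSpace ℝ (Fin L)) :
    |topsum K (s + ε • z) - topsum K s| ≤ |ε| * ∑ i, |z i| := by
  have h := abs_topsum_sub_le hKL (s + ε • z : EuclideanSpace ℝ (Fin L)) s
  have heq : ∀ i, |(s + ε • z) i - s i| = |ε| * |z i| := by
    intro i
    have : (s + ε • z) i = s i + ε * z i := rfl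
    rw [this, add_sub_cancel_left, abs_mul]
  rw [Finset.sum_congr rfl (fun i _ => heq i), ← Finset.mul_sum] at h
  exact h

lemma abs_topsumSm_sub_le {L K : ℕ} (hKL : K ≤ L) (s : EuclideanSpace ℝ (Fin L)) (ε : ℝ) :
    |topsumSm K ε s - topsum K s| ≤
      |ε| * ∫ z, (∑ i, |z i|) ∂(stdGaussian L) := by
  set μ := stdGaussian L
  set c := topsum K s
  have hg : Integrable (fun z : EuclideanSpace ℝ (Fin L) => ∑ i, |z i|) μ :=
    integrable_finset_sum _ fun i _ => integrable_abs_coord L i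
  have hmeas : AEStronglyMeasurable (fun z : EuclideanSpace ℝ (Fin L) => topsum K (s + ε • z)) μ := by
    have : Continuous fun z : EuclideanSpace ℝ (Fin L) => topsum K (s + ε • z) :=
      (continuous_topsum hKL).comp (continuous_const.add (continuous_id.const_smul ε))
    exact this.aestronglyMeasurable
  have hf : Integrable (fun z : EuclideanSpace ℝ (Fin L) => topsum K (s + ε • z)) μ := by
    apply Integrable.mono' ((integrable_const |c|).add (hg.const_mul |ε|)) hmeas
    refine Filter.Eventually.of_forall fun z => ?_
    have h := integrand_bound hKL s ε z
    have habs : |topsum K (s + ε • z)| ≤ |c| + |ε| * ∑ i, |z i| := by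
      have := abs_sub_abs_le_abs_sub (topsum K (s + ε • z)) c
      linarith [abs_sub_abs_le_abs_sub (topsum K (s + ε • z)) c]
    simpa [Real.norm_eq_abs] using habs
  have hsub : topsumSm K ε s - c = ∫ z, (topsum K (s + ε • z) - c) ∂μ := by
    rw [integral_sub hf (integrable_const c), integral_const]
    simp [topsumSm, μ, c]
  rw [hsub]
  calc |∫ z, (topsum K (s + ε • z) - c) ∂μ| ≤ ∫ z, |topsum K (s + ε • z) - c| ∂μ := by
        simpa [Real.norm_eq_abs] using norm_integral_le_integral_norm
          (fun z => topsum K (s + ε • z) - c) (μ := μ)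
    _ ≤ ∫ z, |ε| * ∑ i, |z i| ∂μ := by
        apply integral_mono (hf.sub (integrable_const c)).abs (hg.const_mul |ε|)
        exact fun z => integrand_bound hKL s ε z
    _ = |ε| * ∫ z, (∑ i, |z i|) ∂μ := integral_const_mul _ _

theorem topsumSm_tendsto_topsum' (L K : ℕ) (hL : 1 ≤ L) (hK1 : 1 ≤ K) (hKL : K ≤ L)
    (s : EuclideanSpace ℝ (Fin L)) :
    Filter.Tendsto (fun ε : ℝ => topsumSm K ε s) (nhdsWithin 0 (Set.Ioi 0))
      (nhds (topsum K s)) := by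
  set C := ∫ z, (∑ i, |z i|) ∂(stdGaussian L)
  rw [tendsto_iff_norm_sub_tendsto_zero]
  apply squeeze_zero (fun ε => norm_nonneg _) (g := fun ε => |ε| * C)
  · intro ε
    simpa [Real.norm_eq_abs] using abs_topsumSm_sub_le hKL s ε
  · have hcont : Continuous fun ε : ℝ => |ε| * C :=
      continuous_abs.mul continuous_const
    have h := hcont.tendsto 0
    simp only [abs_zero, zero_mul] at h
    exact h.mono_left nhdsWithin_le_nhds


end Aux

/-- `topsumSm K ε s → topsum K s` as `ε → 0⁺`. -/
theorem topsumSm_tendsto_topsum (L K : ℕ) (hL : 1 ≤ L) (hK1 : 1 ≤ K) (hKL : K ≤ L)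
    (s : EuclideanSpace ℝ (Fin L)) :
    Filter.Tendsto (fun ε : ℝ => topsumSm K ε s) (nhdsWithin 0 (Set.Ioi 0))
      (nhds (topsum K s)) := by
  exact topsumSm_tendsto_topsum' L K hL hK1 hKL s
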